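/- SIC rule for left shift: let A : X × 𝕍 → BitVec n and B : X × 𝕍 → ℕ be terms, and tB a SIC for B w.r.t. X. Then Ψ v := tB v ∧ (∀ x, B (x, v) ≥ n) is a SIC for the term fun (x, v) => A (x, v) <<< B (x, v) w.r.t. X: shifting any n-bit vector by at least n positions yields the zero bitvector, so the result is independent of A and of X. -/
import Mathlib

private lemma shl_zero {n : ℕ} (a : BitVec n) {b : ℕ} (h : b ≥ n) :
    a <<< b = 0 := by
  apply BitVec.eq_of_toNat_eq
  simp [BitVec.toNat_shiftLeft, Nat.shiftLeft_eq]
  obtain ⟨c, rfl⟩ := Nat.exists_eq_add_of_le h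
  rw [pow_add, ← mul_assoc]
  simp [Nat.mul_mod, Nat.mul_mod_left]

/-- SIC rule for left shift on fixed-size bitvectors. -/
theorem sic_shiftLeft {X 𝕍 : Type*} {n : ℕ}
    (A : X × 𝕍 → BitVec n) (B : X × 𝕍 → ℕ) (tB : 𝕍 → Prop)
    (hB : ∀ v, tB v → ∀ x y : X, B (x, v) = B (y, v)) :
    ∀ v, (tB v ∧ ∀ x, B (x, v) ≥ n) →
      ∀ x y : X, A (x, v) <<< B (x, v) = A (y, v) <<< B (y, v) := by
  rintro v ⟨_, hge⟩ x y
  rw [shl_zero _ (hge x), shl_zero _ (hge y)]
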